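/- Let B = (B_a)_{a ≥ 0} be a real-valued stochastic process on a probability space such that each B_a is square-integrable and E[B_a B_b] = (a^{2H} + b^{2H} − |a−b|^{2H})/2 for all a, b ≥ 0 (the covariance of fractional Brownian motion with Hurst parameter H ∈ (1/2,1)). Fix α > 0, set a_t := (H/α) e^{αt/H} for t ∈ ℝ, and define X_t := e^{−αt} B_{a_t}. Then for all s, t ∈ ℝ, E[X_t X_s] = (H/α)^{2H} [ (e^{α(t−s)} + e^{−α(t−s)})/2 − (1/2) e^{α|t−s|} (1 − e^{−α|t−s|/H})^{2H} ]. In particular the covariance of X depends only on |t−s|, so X is a (wide-sense) stationary process. -/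

import Mathlib

open MeasureTheory Real

/-- Lamperti transform of fractional Brownian motion: if `B` has the fBm covariance
with Hurst parameter `H ∈ (1/2,1)`, `a_t = (H/α) e^{αt/H}` and `X_t = e^{−αt} B_{a_t}`,
then `E[X_t X_s] = (H/α)^{2H} [ (e^{α(t−s)} + e^{−α(t−s)})/2 −
(1/2) e^{α|t−s|} (1 − e^{−α|t−s|/H})^{2H} ]`; in particular the covariance depends
only on `|t−s|`, so `X` is wide-sense stationary. -/
theorem lamperti_fbm_covariance
    {Ω : Type*} [MeasurableSpace Ω] (P : Measure Ω) [IsProbabilityMeasure P]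
    (H : ℝ) (hH1 : 1 / 2 < H) (hH2 : H < 1)
    (B : ℝ → Ω → ℝ)
    (hL2 : ∀ a : ℝ, 0 ≤ a → MemLp (B a) 2 P)
    (hcov : ∀ a b : ℝ, 0 ≤ a → 0 ≤ b →
      ∫ ω, B a ω * B b ω ∂P = (a ^ (2 * H) + b ^ (2 * H) - |a - b| ^ (2 * H)) / 2)
    (α : ℝ) (hα : 0 < α)
    (a : ℝ → ℝ) (ha : ∀ t : ℝ, a t = (H / α) * exp (α * t / H))
    (X : ℝ → Ω → ℝ)
    (hX : ∀ (t : ℝ) (ω : Ω), X t ω = exp (-α * t) * B (a t) ω) :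
    ∀ s t : ℝ, ∫ ω, X t ω * X s ω ∂P =
      (H / α) ^ (2 * H) *
        ((exp (α * (t - s)) + exp (-α * (t - s))) / 2 -
          (1 / 2) * exp (α * |t - s|) * (1 - exp (-α * |t - s| / H)) ^ (2 * H)) := by
  have hH0 : (0:ℝ) < H := lt_trans (by norm_num) hH1
  have hc : (0:ℝ) < H / α := div_pos hH0 hα
  have key : ∀ s t : ℝ, s ≤ t → ∫ ω, X t ω * X s ω ∂P =
      (H / α) ^ (2 * H) *
        ((exp (α * (t - s)) + exp (-α * (t - s))) / 2 -
          (1 / 2) * exp (α * |t - s|) * (1 - exp (-α * |t - s| / H)) ^ (2 * H)) := by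
    intro s t h
    have hat : (0:ℝ) ≤ a t := by rw [ha]; positivity
    have has : (0:ℝ) ≤ a s := by rw [ha]; positivity
    have hrw : ∀ ω, X t ω * X s ω
        = (exp (-α * t) * exp (-α * s)) * (B (a t) ω * B (a s) ω) := by
      intro ω; rw [hX, hX]; ring
    simp_rw [hrw]
    rw [integral_const_mul, hcov _ _ hat has, ha, ha]
    have habs : |t - s| = t - s := abs_of_nonneg (sub_nonneg.2 h)
    rw [habs]
    have hxPow : ∀ r : ℝ, (exp (α * r / H)) ^ (2 * H) = exp (α * r) * exp (α * r) := by
      intro r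
      rw [← exp_mul, ← exp_add]
      congr 1
      field_simp
      ring
    have huv : exp (α * s / H) ≤ exp (α * t / H) := by
      apply exp_le_exp.2
      gcongr
    have hw1 : exp (-α * (t - s) / H) ≤ 1 :=
      exp_le_one_iff.2 (by
        apply div_nonpos_of_nonpos_of_nonneg _ hH0.le
        nlinarith)
    have hsplit : exp (α * t / H) - exp (α * s / H)
        = exp (α * t / H) * (1 - exp (-α * (t - s) / H)) := by
      have hv : exp (α * t / H) * exp (-α * (t - s) / H) = exp (α * s / H) := by
        rw [← exp_add]
        congr 1
        field_simp
        ring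
      rw [mul_sub, mul_one, hv]
    have habs2 : |H / α * exp (α * t / H) - H / α * exp (α * s / H)|
        = H / α * (exp (α * t / H) - exp (α * s / H)) := by
      rw [show H / α * exp (α * t / H) - H / α * exp (α * s / H)
          = H / α * (exp (α * t / H) - exp (α * s / H)) by ring]
      exact abs_of_nonneg (mul_nonneg hc.le (sub_nonneg.2 huv))
    rw [habs2, hsplit,
      mul_rpow hc.le (exp_pos _).le, mul_rpow hc.le (exp_pos _).le,
      mul_rpow hc.le (mul_nonneg (exp_pos _).le (sub_nonneg.2 hw1)),
      mul_rpow (exp_pos _).le (sub_nonneg.2 hw1),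
      hxPow, hxPow,
      show -α * t = -(α * t) by ring, show -α * s = -(α * s) by ring,
      exp_neg, exp_neg,
      show α * (t - s) = α * t - α * s by ring,
      show -α * (t - s) = -(α * t - α * s) by ring,
      exp_neg, exp_sub]
    have hx := exp_ne_zero (α * t)
    have hy := exp_ne_zero (α * s)
    field_simp
  intro s t
  rcases le_total s t with h | h
  · exact key s t h
  · have hcomm : ∀ ω, X t ω * X s ω = X s ω * X t ω := fun ω => mul_comm _ _
    simp_rw [hcomm]
    rw [key t s h, abs_sub_comm s t,
      show α * (s - t) = -α * (t - s) by ring,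
      show -α * (s - t) = α * (t - s) by ring]
    ring
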